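/- Fix A > 0 and λ ∈ (0, 1/8), and set ξ = √(1 − 8λ) ∈ (0, 1). Let C = ((1 − ξ)/(2·Γ(1 − ξ))) · (A/2)^{(1+ξ)/2} · Γ((1 − ξ)/2) · ₁F₁[−(1 + ξ)/2; 1 − ξ; 2/A], and define, for s in the domain where all terms make sense, F(s) = (2λ A^s)/(s(s−1) + 2λ) · ₂F₂[1, −s; 3/2 + ξ/2 − s, 3/2 − ξ/2 − s; 2/A] + C · 2^s · Γ(1/2 + ξ/2 − s) · Γ(1/2 − ξ/2 − s) / Γ(−s). Then the limit of F(1/2 + ξ/2 + ε) as ε → 0 (ε ≠ 0) exists and equals (2λ/ξ) · A^{1/2 + ξ/2} · Σ_{j=0}^{∞} ( (−(1+ξ)/2)_j / (j! · (1 − ξ)_j) ) · (2/A)^j · [ ψ(1 + j) + ψ(1 − ξ + j) − ψ(−(1+ξ)/2 + j) − log(2/A) ], where ψ = Γ'/Γ is the digamma function. -/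

import Mathlib

/-- The Pochhammer symbol (rising factorial): `(z)₀ = 1`, `(z)_{n+1} = (z)_n · (z + n)`. -/
noncomputable def poch (z : ℝ) : ℕ → ℝ
  | 0 => 1
  | n + 1 => poch z n * (z + (n : ℝ))

/-- The generalized hypergeometric series `₂F₂[a₁,a₂; b₁,b₂; z]`. -/
noncomputable def F22 (a₁ a₂ b₁ b₂ z : ℝ) : ℝ :=
  ∑' n : ℕ, poch a₁ n * poch a₂ n / (poch b₁ n * poch b₂ n) * z ^ n / (Nat.factorial n : ℝ)

/-- The confluent hypergeometric (Kummer) series `₁F₁[a; b; z]`. -/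
noncomputable def F11 (a b z : ℝ) : ℝ :=
  ∑' n : ℕ, poch a n / poch b n * z ^ n / (Nat.factorial n : ℝ)

/-- The digamma function `ψ = Γ'/Γ`. -/
noncomputable def digamma (x : ℝ) : ℝ := deriv Real.Gamma x / Real.Gamma x

/-- The point `s = 1/2 + ξ/2` is a removable singularity of the explicit fractional-moment
formula `F`: the limit of `F(1/2 + ξ/2 + ε)` as `ε → 0`, `ε ≠ 0`, exists and equals
`(2λ/ξ)·A^{1/2+ξ/2}·Σ_{j≥0} ((−(1+ξ)/2)_j/(j!·(1−ξ)_j))·(2/A)^j·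
  [ψ(1+j) + ψ(1−ξ+j) − ψ(−(1+ξ)/2+j) − log(2/A)]`. -/
lemma poch_prod (x : ℝ) (n : ℕ) : poch x n = ∏ k ∈ Finset.range n, (x + k) := by
  induction n with
  | zero => simp [poch]
  | succ n ih => rw [poch, ih, Finset.prod_range_succ]

lemma poch_one (n : ℕ) : poch 1 n = (n.factorial : ℝ) := by
  induction n with
  | zero => simp [poch]
  | succ n ih => rw [poch, ih]; push_cast [Nat.factorial_succ]; ring

lemma not_neg_nat_of (x : ℝ) (h0 : x ≠ 0) (h1 : -1 < x) : ∀ m : ℕ, x ≠ -m := by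
  intro m
  cases m with
  | zero => simpa using h0
  | succ k =>
    intro h
    have : (0:ℝ) ≤ (k:ℝ) := Nat.cast_nonneg k
    push_cast at h
    linarith

lemma not_neg_nat_of_pos (x : ℝ) (h0 : 0 < x) : ∀ m : ℕ, x ≠ -m := by
  intro m
  have : (0:ℝ) ≤ (m:ℝ) := Nat.cast_nonneg m
  intro h; linarith

lemma hasDerivAt_Gamma (x : ℝ) (hx : ∀ m : ℕ, x ≠ -m) :
    HasDerivAt Real.Gamma (digamma x * Real.Gamma x) x := by
  have h := (Real.differentiableAt_Gamma hx).hasDerivAt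
  have hne : Real.Gamma x ≠ 0 := Real.Gamma_ne_zero hx
  have : digamma x * Real.Gamma x = deriv Real.Gamma x := by
    rw [digamma, div_mul_cancel₀ _ hne]
  rw [this]; exact h

lemma digamma_add_one (x : ℝ) (hx : ∀ m : ℕ, x ≠ -m) :
    digamma (x + 1) = digamma x + 1 / x := by
  have hx1 : ∀ m : ℕ, x + 1 ≠ -m := by
    intro m h
    have := hx (m + 1)
    push_cast at this h
    apply this; linarith
  have h0 : x ≠ 0 := by simpa using hx 0
  have hG : Real.Gamma x ≠ 0 := Real.Gamma_ne_zero hx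
  -- Γ(y+1) = y Γ(y) near x, differentiate
  have hL : HasDerivAt (fun y : ℝ => Real.Gamma (y + 1))
      (digamma (x+1) * Real.Gamma (x+1)) x := by
    have := (hasDerivAt_Gamma (x+1) hx1).comp x ((hasDerivAt_id x).add_const 1)
    simpa [Function.comp_def] using this
  have hR : HasDerivAt (fun y : ℝ => y * Real.Gamma y)
      (1 * Real.Gamma x + x * (digamma x * Real.Gamma x)) x :=
    (hasDerivAt_id x).mul (hasDerivAt_Gamma x hx)
  have heq : (fun y : ℝ => Real.Gamma (y + 1)) =ᶠ[nhds x] fun y : ℝ => y * Real.Gamma y := by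
    have : {y : ℝ | y ≠ 0} ∈ nhds x := isOpen_ne.mem_nhds h0
    filter_upwards [this] with y hy
    exact Real.Gamma_add_one hy
  have hL' : HasDerivAt (fun y : ℝ => y * Real.Gamma y)
      (digamma (x+1) * Real.Gamma (x+1)) x := by
    exact hL.congr_of_eventuallyEq heq.symm
  have huniq := hL'.unique hR
  have hGx1 : Real.Gamma (x+1) = x * Real.Gamma x := Real.Gamma_add_one h0
  rw [hGx1] at huniq
  have h2 : (digamma (x+1) * x) * Real.Gamma x = (digamma x * x + 1) * Real.Gamma x := by
    linear_combination huniq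
  have h3 := mul_right_cancel₀ hG h2
  field_simp
  linarith [h3]

lemma digamma_add_nat (x : ℝ) (hx : ∀ m : ℕ, x ≠ -m) (n : ℕ) :
    digamma (x + n) = digamma x + ∑ k ∈ Finset.range n, 1 / (x + k) := by
  induction n with
  | zero => simp
  | succ n ih =>
    have hxn : ∀ m : ℕ, x + n ≠ -m := by
      intro m h
      have := hx (m + n)
      push_cast at this h
      apply this; linarith
    have : x + (n + 1 : ℕ) = (x + n) + 1 := by push_cast; ring
    rw [this, digamma_add_one _ hxn, ih, Finset.sum_range_succ, add_assoc]

noncomputable def Qk (ξ A : ℝ) (k : ℕ) (ε : ℝ) : ℝ :=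
  (-((1 + ξ)/2 + ε) + k) * (2/A) / ((1 - ε + k) * (1 - ξ - ε + k))

noncomputable def fterm (ξ A : ℝ) (n : ℕ) (ε : ℝ) : ℝ :=
  poch 1 n * poch (-((1 + ξ)/2 + ε)) n / (poch (1 - ε) n * poch (1 - ξ - ε) n) *
    (2/A)^n / (n.factorial : ℝ)

noncomputable def Sfun (ξ : ℝ) (n : ℕ) (ε : ℝ) : ℝ :=
  ∑ k ∈ Finset.range n,
    (-(1 / (-((1 + ξ)/2 + ε) + k)) + 1/(1 - ε + k) + 1/(1 - ξ - ε + k))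

noncomputable def Dterm (ξ A : ℝ) (n : ℕ) (ε : ℝ) : ℝ := fterm ξ A n ε * Sfun ξ n ε

noncomputable def rr (ξ : ℝ) : ℝ := min ((1 - ξ)/4) (ξ/2)

lemma aux_cancel (nn X Y zz : ℝ) (h : nn ≠ 0) : nn * X / Y * zz / nn = X * zz / Y := by
  rcases eq_or_ne Y 0 with rfl | hY
  · simp
  · field_simp

lemma fterm_eq_prod (ξ A : ℝ) (n : ℕ) (ε : ℝ) :
    fterm ξ A n ε = ∏ k ∈ Finset.range n, Qk ξ A k ε := by
  unfold fterm Qk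
  rw [poch_one, poch_prod, poch_prod, poch_prod]
  rw [Finset.prod_div_distrib, Finset.prod_mul_distrib, Finset.prod_mul_distrib,
    Finset.prod_const, Finset.card_range]
  exact aux_cancel _ _ _ _ (Nat.cast_ne_zero.2 n.factorial_ne_zero)

lemma rr_pos {ξ : ℝ} (hξ0 : 0 < ξ) (hξ1 : ξ < 1) : 0 < rr ξ :=
  lt_min (by linarith) (by linarith)

lemma rr_le_quarter {ξ : ℝ} (hξ0 : 0 < ξ) : rr ξ ≤ 1/4 :=
  le_trans (min_le_left _ _) (by linarith)

lemma rr_le1 {ξ : ℝ} : 4 * rr ξ ≤ 1 - ξ := by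
  have := min_le_left ((1 - ξ)/4) (ξ/2); unfold rr; linarith

lemma rr_le2 {ξ : ℝ} : 2 * rr ξ ≤ ξ := by
  have := min_le_right ((1 - ξ)/4) (ξ/2); unfold rr; linarith

lemma b_lb {ξ ε : ℝ} (hξ0 : 0 < ξ) (hε : ε ∈ Set.Ioo (-(rr ξ)) (rr ξ)) (k : ℕ) :
    3/4 * ((k : ℝ) + 1) ≤ 1 - ε + k := by
  obtain ⟨h1, h2⟩ := hε
  have hk : (0:ℝ) ≤ k := Nat.cast_nonneg k
  have hr := rr_le_quarter hξ0
  nlinarith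

lemma c_lb {ξ ε : ℝ} (hξ0 : 0 < ξ) (hε : ε ∈ Set.Ioo (-(rr ξ)) (rr ξ)) (k : ℕ) :
    3 * rr ξ * ((k : ℝ) + 1) ≤ 1 - ξ - ε + k := by
  obtain ⟨h1, h2⟩ := hε
  have hk : (0:ℝ) ≤ k := Nat.cast_nonneg k
  have hr := rr_le_quarter hξ0
  have h4 := rr_le1 (ξ := ξ)
  nlinarith

lemma a_abs_lb {ξ ε : ℝ} (hξ0 : 0 < ξ) (hξ1 : ξ < 1)
    (hε : ε ∈ Set.Ioo (-(rr ξ)) (rr ξ)) (k : ℕ) :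
    rr ξ ≤ |(-((1 + ξ)/2 + ε) + k)| := by
  obtain ⟨h1, h2⟩ := hε
  have hr := rr_le_quarter hξ0
  have h4 := rr_le1 (ξ := ξ)
  rcases Nat.eq_zero_or_pos k with rfl | hk
  · rw [abs_of_neg (by push_cast; linarith)]
    push_cast; linarith
  · have hk1 : (1:ℝ) ≤ k := by exact_mod_cast hk
    rw [abs_of_pos (by linarith)]
    linarith

lemma a_abs_ub {ξ ε : ℝ} (hξ0 : 0 < ξ) (hξ1 : ξ < 1)
    (hε : ε ∈ Set.Ioo (-(rr ξ)) (rr ξ)) (k : ℕ) :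
    |(-((1 + ξ)/2 + ε) + k)| ≤ (k : ℝ) + 2 := by
  obtain ⟨h1, h2⟩ := hε
  have hr := rr_le_quarter hξ0
  have hk : (0:ℝ) ≤ k := Nat.cast_nonneg k
  rw [abs_le]
  constructor <;> nlinarith

lemma b_pos {ξ ε : ℝ} (hξ0 : 0 < ξ) (hε : ε ∈ Set.Ioo (-(rr ξ)) (rr ξ)) (k : ℕ) :
    0 < 1 - ε + (k : ℝ) := by
  have := b_lb hξ0 hε k
  have hk : (0:ℝ) ≤ k := Nat.cast_nonneg k
  nlinarith

lemma c_pos {ξ ε : ℝ} (hξ0 : 0 < ξ) (hξ1 : ξ < 1)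
    (hε : ε ∈ Set.Ioo (-(rr ξ)) (rr ξ)) (k : ℕ) :
    0 < 1 - ξ - ε + (k : ℝ) := by
  have := c_lb hξ0 hε k
  have hk : (0:ℝ) ≤ k := Nat.cast_nonneg k
  have hr := rr_pos hξ0 hξ1
  nlinarith

lemma a_ne {ξ ε : ℝ} (hξ0 : 0 < ξ) (hξ1 : ξ < 1)
    (hε : ε ∈ Set.Ioo (-(rr ξ)) (rr ξ)) (k : ℕ) :
    (-((1 + ξ)/2 + ε) + (k : ℝ)) ≠ 0 := by
  intro h
  have h1 := a_abs_lb hξ0 hξ1 hε k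
  have hr := rr_pos hξ0 hξ1
  rw [h, abs_zero] at h1
  linarith

lemma Qk_abs_le {ξ A ε : ℝ} (hξ0 : 0 < ξ) (hξ1 : ξ < 1) (hA : 0 < A)
    (hε : ε ∈ Set.Ioo (-(rr ξ)) (rr ξ)) (k : ℕ) :
    |Qk ξ A k ε| ≤ (4 * (2/A) / (9 * rr ξ)) * ((k : ℝ) + 2) / (((k : ℝ) + 1)^2) := by
  have hz : 0 < 2/A := by positivity
  have hb := b_pos hξ0 hε k
  have hc := c_pos hξ0 hξ1 hε k
  have hblb := b_lb hξ0 hε k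
  have hclb := c_lb hξ0 hε k
  have hr := rr_pos hξ0 hξ1
  have hk : (0:ℝ) ≤ k := Nat.cast_nonneg k
  have h1 : |Qk ξ A k ε| =
      |(-((1 + ξ)/2 + ε) + k)| * (2/A) / ((1 - ε + k) * (1 - ξ - ε + k)) := by
    rw [Qk, abs_div, abs_mul, abs_of_pos hz, abs_of_pos (mul_pos hb hc)]
  rw [h1]
  have hnum : |(-((1 + ξ)/2 + ε) + k)| * (2/A) ≤ ((k : ℝ) + 2) * (2/A) :=
    mul_le_mul_of_nonneg_right (a_abs_ub hξ0 hξ1 hε k) (le_of_lt hz)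
  have hden : (3/4 * ((k:ℝ)+1)) * (3 * rr ξ * ((k:ℝ)+1)) ≤ (1 - ε + k) * (1 - ξ - ε + k) :=
    mul_le_mul hblb hclb (by nlinarith) (by nlinarith)
  have hden0 : 0 < (3/4 * ((k:ℝ)+1)) * (3 * rr ξ * ((k:ℝ)+1)) := by positivity
  calc |(-((1 + ξ)/2 + ε) + k)| * (2/A) / ((1 - ε + k) * (1 - ξ - ε + k))
      ≤ ((k : ℝ) + 2) * (2/A) / ((3/4 * ((k:ℝ)+1)) * (3 * rr ξ * ((k:ℝ)+1))) := by
        apply div_le_div₀ (by positivity) hnum hden0 hden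
    _ = (4 * (2/A) / (9 * rr ξ)) * ((k : ℝ) + 2) / (((k : ℝ) + 1)^2) := by
        field_simp; ring

lemma fterm_abs_le {ξ A : ℝ} (hξ0 : 0 < ξ) (hξ1 : ξ < 1) (hA : 0 < A)
    (n : ℕ) {ε : ℝ} (hε : ε ∈ Set.Ioo (-(rr ξ)) (rr ξ)) :
    |fterm ξ A n ε| ≤ ((n : ℝ) + 1) * (4 * (2/A) / (9 * rr ξ))^n / (n.factorial : ℝ) := by
  set w := 4 * (2/A) / (9 * rr ξ) with hw
  have hw0 : 0 < w := by
    have := rr_pos hξ0 hξ1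
    positivity
  induction n with
  | zero =>
    rw [fterm_eq_prod]
    simp
  | succ n ih =>
    have hsplit : fterm ξ A (n+1) ε = fterm ξ A n ε * Qk ξ A n ε := by
      rw [fterm_eq_prod, fterm_eq_prod, Finset.prod_range_succ]
    have hq := Qk_abs_le hξ0 hξ1 hA hε n
    rw [hsplit, abs_mul]
    have hq' : |Qk ξ A n ε| ≤ w * ((n : ℝ) + 2) / (((n : ℝ) + 1)^2) := by
      rw [hw]; exact hq
    have step := mul_le_mul ih hq' (abs_nonneg _) (by positivity)
    refine le_trans step (le_of_eq ?_)
    have hfact : ((n+1).factorial : ℝ) = ((n:ℝ)+1) * (n.factorial : ℝ) := by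
      push_cast [Nat.factorial_succ]; ring
    rw [hfact]
    have h1 : ((n:ℝ)+1) ≠ 0 := by positivity
    have h2 : (n.factorial : ℝ) ≠ 0 := Nat.cast_ne_zero.2 n.factorial_ne_zero
    push_cast
    field_simp
    ring

lemma Sfun_abs_le {ξ : ℝ} (hξ0 : 0 < ξ) (hξ1 : ξ < 1)
    (n : ℕ) {ε : ℝ} (hε : ε ∈ Set.Ioo (-(rr ξ)) (rr ξ)) :
    |Sfun ξ n ε| ≤ 3 * (n : ℝ) / rr ξ := by
  have hr := rr_pos hξ0 hξ1
  have key : ∀ k ∈ Finset.range n,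
      |(-(1 / (-((1 + ξ)/2 + ε) + (k:ℝ))) + 1/(1 - ε + k) + 1/(1 - ξ - ε + k))| ≤ 3 / rr ξ := by
    intro k _
    have ha := a_abs_lb hξ0 hξ1 hε k
    have hb := b_lb hξ0 hε k
    have hc := c_lb hξ0 hε k
    have hbp := b_pos hξ0 hε k
    have hcp := c_pos hξ0 hξ1 hε k
    have hk : (0:ℝ) ≤ k := Nat.cast_nonneg k
    have h1 : |(1 : ℝ) / (-((1 + ξ)/2 + ε) + (k:ℝ))| ≤ 1 / rr ξ := by
      rw [abs_div, abs_one]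
      exact one_div_le_one_div_of_le hr ha
    have h2 : (1 : ℝ) / (1 - ε + k) ≤ 1 / rr ξ := by
      apply one_div_le_one_div_of_le hr
      have := rr_le_quarter hξ0
      nlinarith
    have h3 : (1 : ℝ) / (1 - ξ - ε + k) ≤ 1 / rr ξ := by
      apply one_div_le_one_div_of_le hr
      nlinarith
    have h2' : (0:ℝ) < 1 / (1 - ε + k) := by positivity
    have h3' : (0:ℝ) < 1 / (1 - ξ - ε + k) := by positivity
    calc |(-(1 / (-((1 + ξ)/2 + ε) + (k:ℝ))) + 1/(1 - ε + k) + 1/(1 - ξ - ε + k))|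
        ≤ |(-(1 / (-((1 + ξ)/2 + ε) + (k:ℝ))) + 1/(1 - ε + k))| + |1/(1 - ξ - ε + k)| :=
          abs_add_le _ _
      _ ≤ |(-(1 / (-((1 + ξ)/2 + ε) + (k:ℝ))))| + |1/(1 - ε + k)| + |1/(1 - ξ - ε + k)| := by
          linarith [abs_add_le (-(1 / (-((1 + ξ)/2 + ε) + (k:ℝ)))) (1/(1 - ε + (k:ℝ)))]
      _ = |(1 / (-((1 + ξ)/2 + ε) + (k:ℝ)))| + |1/(1 - ε + k)| + |1/(1 - ξ - ε + k)| := by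
          rw [abs_neg]
      _ ≤ 3 / rr ξ := by
          rw [abs_of_pos h2', abs_of_pos h3']
          have h33 : 3 / rr ξ = 1/rr ξ + 1/rr ξ + 1/rr ξ := by ring
          linarith
  calc |Sfun ξ n ε| ≤ ∑ k ∈ Finset.range n, (3 / rr ξ) := by
        refine le_trans (Finset.abs_sum_le_sum_abs _ _) (Finset.sum_le_sum key)
    _ = 3 * (n : ℝ) / rr ξ := by
        rw [Finset.sum_const, Finset.card_range]; push_cast; ring

set_option maxHeartbeats 2000000 in
lemma Qk_hasDerivAt {ξ A : ℝ} (k : ℕ) {ε : ℝ}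
    (ha : (-((1 + ξ)/2 + ε) + (k:ℝ)) ≠ 0)
    (hb : (1 - ε + (k:ℝ)) ≠ 0) (hc : (1 - ξ - ε + (k:ℝ)) ≠ 0) :
    HasDerivAt (Qk ξ A k)
      (Qk ξ A k ε * (-(1 / (-((1 + ξ)/2 + ε) + k)) + 1/(1 - ε + k) + 1/(1 - ξ - ε + k))) ε := by
  have hnum : HasDerivAt (fun ε : ℝ => (-((1 + ξ)/2 + ε) + (k:ℝ)) * (2/A)) (-1 * (2/A)) ε :=
    ((((hasDerivAt_id ε).const_add ((1 + ξ)/2)).neg).add_const (k:ℝ)).mul_const (2/A)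
  have hb' : HasDerivAt (fun ε : ℝ => 1 - ε + (k:ℝ)) (-1) ε := by
    simpa using (((hasDerivAt_id ε).const_sub 1).add_const (k:ℝ))
  have hc' : HasDerivAt (fun ε : ℝ => 1 - ξ - ε + (k:ℝ)) (-1) ε := by
    simpa using (((hasDerivAt_id ε).const_sub (1 - ξ)).add_const (k:ℝ))
  have hden : HasDerivAt (fun ε : ℝ => (1 - ε + (k:ℝ)) * (1 - ξ - ε + (k:ℝ)))
      (-1 * (1 - ξ - ε + (k:ℝ)) + (1 - ε + (k:ℝ)) * -1) ε := hb'.mul hc'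
  have h := hnum.div hden (mul_ne_zero hb hc)
  have hQ : HasDerivAt (Qk ξ A k)
      ((-1 * (2/A) * ((1 - ε + (k:ℝ)) * (1 - ξ - ε + (k:ℝ))) -
          (-((1 + ξ)/2 + ε) + (k:ℝ)) * (2/A) *
            (-1 * (1 - ξ - ε + (k:ℝ)) + (1 - ε + (k:ℝ)) * -1)) /
        ((1 - ε + (k:ℝ)) * (1 - ξ - ε + (k:ℝ))) ^ 2) ε := h
  convert hQ using 1
  rw [Qk]
  generalize (2:ℝ)/A = z
  revert ha hb hc
  generalize -((1 + ξ) / 2 + ε) + (k:ℝ) = a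
  generalize (1:ℝ) - ε + (k:ℝ) = b
  generalize (1:ℝ) - ξ - ε + (k:ℝ) = c
  intro ha hb hc
  field_simp
  ring

lemma fterm_hasDerivAt {ξ A : ℝ} (hξ0 : 0 < ξ) (hξ1 : ξ < 1) (n : ℕ) {ε : ℝ}
    (hε : ε ∈ Set.Ioo (-(rr ξ)) (rr ξ)) :
    HasDerivAt (fterm ξ A n) (Dterm ξ A n ε) ε := by
  classical
  have h := HasDerivAt.finset_prod (u := Finset.range n) (f := fun k => Qk ξ A k)
    (f' := fun k => Qk ξ A k ε *
      (-(1 / (-((1 + ξ)/2 + ε) + k)) + 1/(1 - ε + k) + 1/(1 - ξ - ε + k)))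
    (fun k _ => Qk_hasDerivAt k (a_ne hξ0 hξ1 hε k) (ne_of_gt (b_pos hξ0 hε k))
      (ne_of_gt (c_pos hξ0 hξ1 hε k)))
  have hfun : (∏ k ∈ Finset.range n, Qk ξ A k) = fterm ξ A n :=
    funext fun ε => by rw [Finset.prod_apply]; exact (fterm_eq_prod ξ A n ε).symm
  rw [hfun] at h
  convert h using 1
  · rfl
  · rfl
  rw [Dterm, Sfun, fterm_eq_prod, Finset.mul_sum]
  apply Finset.sum_congr rfl
  intro k hk
  rw [smul_eq_mul, ← mul_assoc, Finset.prod_erase_mul _ _ hk]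

lemma nat_succ_sq_le (n : ℕ) : ((n:ℝ) + 1)^2 ≤ 4^n := by
  induction n with
  | zero => norm_num
  | succ n ih =>
    have : ((n:ℝ) + 1 + 1)^2 ≤ 4 * ((n:ℝ)+1)^2 := by nlinarith [Nat.cast_nonneg (α := ℝ) n]
    push_cast
    calc ((n:ℝ) + 1 + 1)^2 ≤ 4 * ((n:ℝ)+1)^2 := this
      _ ≤ 4 * 4^n := by linarith
      _ = 4^(n+1) := by ring

lemma Dterm_abs_le {ξ A : ℝ} (hξ0 : 0 < ξ) (hξ1 : ξ < 1) (hA : 0 < A)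
    (n : ℕ) {ε : ℝ} (hε : ε ∈ Set.Ioo (-(rr ξ)) (rr ξ)) :
    ‖Dterm ξ A n ε‖ ≤
      (3 / rr ξ) * ((4 * (4 * (2/A) / (9 * rr ξ)))^n / (n.factorial : ℝ)) := by
  set w := 4 * (2/A) / (9 * rr ξ) with hw
  have hr := rr_pos hξ0 hξ1
  have hw0 : 0 < w := by positivity
  have hf := fterm_abs_le hξ0 hξ1 hA n hε
  have hs := Sfun_abs_le hξ0 hξ1 n hε
  rw [Real.norm_eq_abs, Dterm, abs_mul]
  have hfact : (0:ℝ) < (n.factorial : ℝ) := by exact_mod_cast n.factorial_pos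
  have step := mul_le_mul hf hs (abs_nonneg _) (by positivity)
  refine le_trans step ?_
  have hsq := nat_succ_sq_le n
  have hn0 : (0:ℝ) ≤ n := Nat.cast_nonneg n
  have h1 : ((n:ℝ)+1) * (n:ℝ) ≤ (4:ℝ)^n := by nlinarith
  have hwn : (0:ℝ) ≤ w^n := by positivity
  rw [mul_pow, div_mul_div_comm, div_mul_div_comm]
  apply div_le_div₀ (by positivity) ?_ (by positivity) (le_of_eq (by ring))
  nlinarith [mul_le_mul_of_nonneg_right h1 hwn]

lemma succ_le_two_pow (n : ℕ) : ((n:ℝ) + 1) ≤ 2^n := by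
  induction n with
  | zero => norm_num
  | succ n ih =>
    have h2 : (0:ℝ) < 2^n := by positivity
    push_cast
    rw [pow_succ]
    nlinarith

set_option maxHeartbeats 1000000 in
lemma summable_fterm {ξ A : ℝ} (hξ0 : 0 < ξ) (hξ1 : ξ < 1) (hA : 0 < A)
    {ε : ℝ} (hε : ε ∈ Set.Ioo (-(rr ξ)) (rr ξ)) :
    Summable (fun n => fterm ξ A n ε) := by
  have hr := rr_pos hξ0 hξ1
  set w := 4 * (2/A) / (9 * rr ξ) with hw
  have hw0 : 0 < w := by positivity
  have hu : Summable (fun n : ℕ => (2*w)^n / (n.factorial : ℝ)) :=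
    Real.summable_pow_div_factorial (2*w)
  refine Summable.of_norm_bounded hu (fun n => ?_)
  refine le_trans (fterm_abs_le hξ0 hξ1 hA n hε) ?_
  rw [mul_pow]
  have h1 := succ_le_two_pow n
  have hfact : (0:ℝ) < (n.factorial : ℝ) := by exact_mod_cast n.factorial_pos
  apply div_le_div₀ (by positivity) ?_ hfact le_rfl
  exact mul_le_mul_of_nonneg_right h1 (by positivity)

set_option maxHeartbeats 1000000 in
lemma summable_Dterm {ξ A : ℝ} (hξ0 : 0 < ξ) (hξ1 : ξ < 1) (hA : 0 < A) :
    Summable (fun n => Dterm ξ A n 0) := by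
  have hr := rr_pos hξ0 hξ1
  have h0mem : (0:ℝ) ∈ Set.Ioo (-(rr ξ)) (rr ξ) := ⟨by linarith, hr⟩
  have hu : Summable (fun n : ℕ =>
      (3 / rr ξ) * ((4 * (4 * (2/A) / (9 * rr ξ)))^n / (n.factorial : ℝ))) :=
    (Real.summable_pow_div_factorial _).mul_left _
  exact Summable.of_norm_bounded hu (fun n => Dterm_abs_le hξ0 hξ1 hA n h0mem)

set_option maxHeartbeats 1000000 in
lemma G_hasDerivAt {ξ A : ℝ} (hξ0 : 0 < ξ) (hξ1 : ξ < 1) (hA : 0 < A) :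
    HasDerivAt (fun ε => ∑' n, fterm ξ A n ε) (∑' n, Dterm ξ A n 0) 0 := by
  have hr := rr_pos hξ0 hξ1
  have h0mem : (0:ℝ) ∈ Set.Ioo (-(rr ξ)) (rr ξ) := ⟨by linarith, hr⟩
  have hu : Summable (fun n : ℕ =>
      (3 / rr ξ) * ((4 * (4 * (2/A) / (9 * rr ξ)))^n / (n.factorial : ℝ))) :=
    (Real.summable_pow_div_factorial _).mul_left _
  exact hasDerivAt_tsum_of_isPreconnected hu
    isOpen_Ioo (convex_Ioo _ _).isPreconnected
    (fun n y hy => fterm_hasDerivAt hξ0 hξ1 n hy)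
    (fun n y hy => Dterm_abs_le hξ0 hξ1 hA n hy)
    h0mem (summable_fterm hξ0 hξ1 hA h0mem) h0mem

lemma aux2 (F P Q Z : ℝ) (hF : F ≠ 0) : F * P / (F * Q) * Z / F = P / (F * Q) * Z := by
  rcases eq_or_ne Q 0 with rfl | hQ
  · simp
  · field_simp

lemma aux3 (F P Q Z : ℝ) (hF : F ≠ 0) : P / Q * Z / F = P / (F * Q) * Z := by
  rcases eq_or_ne Q 0 with rfl | hQ
  · simp
  · field_simp

lemma fterm_zero (ξ A : ℝ) (n : ℕ) :
    fterm ξ A n 0 =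
      poch (-(1 + ξ) / 2) n / ((Nat.factorial n : ℝ) * poch (1 - ξ) n) * (2 / A) ^ n := by
  have e1 : -((1 + ξ)/2 + (0:ℝ)) = -(1 + ξ) / 2 := by ring
  have e2 : (1:ℝ) - 0 = 1 := by ring
  have e3 : (1:ℝ) - ξ - 0 = 1 - ξ := by ring
  rw [fterm, e1, e2, e3, poch_one]
  exact aux2 _ _ _ _ (Nat.cast_ne_zero.2 n.factorial_ne_zero)

lemma F11_eq (ξ A : ℝ) : F11 (-(1 + ξ) / 2) (1 - ξ) (2 / A) = ∑' n, fterm ξ A n 0 := by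
  unfold F11
  apply tsum_congr
  intro n
  rw [fterm_zero]
  exact aux3 _ _ _ _ (Nat.cast_ne_zero.2 n.factorial_ne_zero)

lemma Sfun_zero (ξ : ℝ) (n : ℕ) :
    Sfun ξ n 0 = ∑ k ∈ Finset.range n,
      (-(1 / (-(1 + ξ) / 2 + k)) + 1/(1 + (k:ℝ)) + 1/(1 - ξ + k)) := by
  rw [Sfun]
  apply Finset.sum_congr rfl
  intro k _
  rw [show -((1 + ξ)/2 + (0:ℝ)) = -(1 + ξ) / 2 from by ring,
    show (1:ℝ) - 0 = 1 from by ring, show (1:ℝ) - ξ - 0 = 1 - ξ from by ring]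

set_option maxHeartbeats 4000000 in
theorem removable_singularity_of_moment_formula
    (A lam : ℝ) (hA : 0 < A) (hlam : lam ∈ Set.Ioo (0 : ℝ) (1/8))
    (ξ : ℝ) (hξ : ξ = Real.sqrt (1 - 8 * lam))
    (C : ℝ)
    (hC : C = ((1 - ξ) / (2 * Real.Gamma (1 - ξ))) * (A / 2) ^ ((1 + ξ) / 2) *
      Real.Gamma ((1 - ξ) / 2) * F11 (-(1 + ξ) / 2) (1 - ξ) (2 / A))
    (F : ℝ → ℝ)
    (hF : ∀ s : ℝ, F s =
      (2 * lam * A ^ s) / (s * (s - 1) + 2 * lam) *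
          F22 1 (-s) (3/2 + ξ/2 - s) (3/2 - ξ/2 - s) (2 / A) +
        C * 2 ^ s * Real.Gamma (1/2 + ξ/2 - s) * Real.Gamma (1/2 - ξ/2 - s) /
          Real.Gamma (-s)) :
    Filter.Tendsto (fun ε : ℝ => F (1/2 + ξ/2 + ε)) (nhdsWithin 0 {(0 : ℝ)}ᶜ)
      (nhds ((2 * lam / ξ) * A ^ (1/2 + ξ/2) *
        ∑' j : ℕ,
          poch (-(1 + ξ) / 2) j / ((Nat.factorial j : ℝ) * poch (1 - ξ) j) * (2 / A) ^ j *
            (digamma (1 + j) + digamma (1 - ξ + j) - digamma (-(1 + ξ) / 2 + j) -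
              Real.log (2 / A)))) := by
  obtain ⟨hlam0, hlam18⟩ := hlam
  have h8 : 0 < 1 - 8 * lam := by linarith
  have hξ2 : ξ^2 = 1 - 8 * lam := by rw [hξ]; exact Real.sq_sqrt h8.le
  have hξ0 : 0 < ξ := by rw [hξ]; exact Real.sqrt_pos.2 h8
  have hξ1 : ξ < 1 := by nlinarith
  have hlam_eq : lam = (1 - ξ^2)/8 := by linarith
  have hr := rr_pos hξ0 hξ1
  have hr4 := rr_le_quarter hξ0
  have hr1 := rr_le1 (ξ := ξ)
  have hr2 := rr_le2 (ξ := ξ)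
  have h0mem : (0:ℝ) ∈ Set.Ioo (-(rr ξ)) (rr ξ) := ⟨by linarith, hr⟩
  set G : ℝ → ℝ := fun ε => ∑' n, fterm ξ A n ε with hGdef
  set DG : ℝ := ∑' n, Dterm ξ A n 0 with hDGdef
  -- basic nonvanishing facts
  have hsne : ∀ m : ℕ, (-(1+ξ)/2 : ℝ) ≠ -(m:ℝ) :=
    not_neg_nat_of _ (by intro h; nlinarith) (by nlinarith)
  have hΓs_ne : Real.Gamma (-(1+ξ)/2) ≠ 0 := Real.Gamma_ne_zero hsne
  have hmξne : ∀ m : ℕ, -ξ ≠ -(m:ℝ) :=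
    not_neg_nat_of _ (neg_ne_zero.2 hξ0.ne') (by linarith)
  have hΓmξ_ne : Real.Gamma (-ξ) ≠ 0 := Real.Gamma_ne_zero hmξne
  have hΓ1ξ_ne : Real.Gamma (1-ξ) ≠ 0 :=
    Real.Gamma_ne_zero (not_neg_nat_of_pos _ (by linarith))
  have h2p_ne : (2:ℝ)^((1+ξ)/2) ≠ 0 := (Real.rpow_pos_of_pos two_pos _).ne'
  have hAp_ne : (A:ℝ)^((1+ξ)/2) ≠ 0 := (Real.rpow_pos_of_pos hA _).ne'
  have hgam_ξ : Real.Gamma (1-ξ) = -ξ * Real.Gamma (-ξ) := by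
    have h := Real.Gamma_add_one (s := -ξ) (neg_ne_zero.2 hξ0.ne')
    rwa [show -ξ + 1 = 1 - ξ from by ring] at h
  have hgam_s : Real.Gamma ((1-ξ)/2) = (-(1+ξ)/2) * Real.Gamma (-(1+ξ)/2) := by
    have h := Real.Gamma_add_one (s := (-(1+ξ)/2 : ℝ)) (by intro hh; nlinarith)
    rwa [show (-(1+ξ)/2 : ℝ) + 1 = (1-ξ)/2 from by ring] at h
  have hψmξ : digamma (-ξ) = digamma (1-ξ) + 1/ξ := by
    have h := digamma_add_one (-ξ) hmξne
    rw [show -ξ + 1 = 1 - ξ from by ring] at h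
    rw [h]; ring
  have hG0 : F11 (-(1 + ξ) / 2) (1 - ξ) (2 / A) = G 0 := by
    rw [hGdef]; exact F11_eq ξ A
  have hlog : Real.log (2/A) = Real.log 2 - Real.log A := Real.log_div two_ne_zero hA.ne'
  -- derivative components at 0
  have hd_A : HasDerivAt (fun ε : ℝ => A^((1+ξ)/2+ε)) (A^((1+ξ)/2) * Real.log A) 0 := by
    have hfun : (fun ε : ℝ => A^((1+ξ)/2+ε)) =
        fun ε => Real.exp (Real.log A * ((1+ξ)/2+ε)) :=
      funext fun ε => Real.rpow_def_of_pos hA _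
    have hin : HasDerivAt (fun ε : ℝ => Real.log A * ((1+ξ)/2+ε)) (Real.log A) 0 := by
      simpa using (((hasDerivAt_id (0:ℝ)).const_add ((1+ξ)/2)).const_mul (Real.log A))
    have h := hin.exp
    rw [hfun]
    convert h using 1
    rw [add_zero, ← Real.rpow_def_of_pos hA]
  have hd_2 : HasDerivAt (fun ε : ℝ => (2:ℝ)^((1+ξ)/2+ε)) ((2:ℝ)^((1+ξ)/2) * Real.log 2) 0 := by
    have hfun : (fun ε : ℝ => (2:ℝ)^((1+ξ)/2+ε)) =
        fun ε => Real.exp (Real.log 2 * ((1+ξ)/2+ε)) :=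
      funext fun ε => Real.rpow_def_of_pos two_pos _
    have hin : HasDerivAt (fun ε : ℝ => Real.log 2 * ((1+ξ)/2+ε)) (Real.log 2) 0 := by
      simpa using (((hasDerivAt_id (0:ℝ)).const_add ((1+ξ)/2)).const_mul (Real.log 2))
    have h := hin.exp
    rw [hfun]
    convert h using 1
    rw [add_zero, ← Real.rpow_def_of_pos two_pos]
  have hd_G : HasDerivAt G DG 0 := by
    rw [hGdef, hDGdef]; exact G_hasDerivAt hξ0 hξ1 hA
  have hd_g1 : HasDerivAt (fun ε : ℝ => Real.Gamma (1-ε))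
      (digamma (1-(0:ℝ)) * Real.Gamma (1-(0:ℝ)) * (-1)) 0 := by
    have hin : HasDerivAt (fun ε : ℝ => 1-ε) (-1 : ℝ) 0 := by
      simpa using ((hasDerivAt_id (0:ℝ)).const_sub 1)
    have harg : ∀ m : ℕ, (1 - (0:ℝ)) ≠ -(m:ℝ) := by
      intro m; rw [sub_zero]; exact not_neg_nat_of_pos 1 one_pos m
    exact (hasDerivAt_Gamma (1-(0:ℝ)) harg).comp 0 hin
  have hd_g2 : HasDerivAt (fun ε : ℝ => Real.Gamma (-ξ-ε))
      (digamma (-ξ-(0:ℝ)) * Real.Gamma (-ξ-(0:ℝ)) * (-1)) 0 := by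
    have hin : HasDerivAt (fun ε : ℝ => -ξ-ε) (-1 : ℝ) 0 := by
      simpa using ((hasDerivAt_id (0:ℝ)).const_sub (-ξ))
    have harg : ∀ m : ℕ, (-ξ - (0:ℝ)) ≠ -(m:ℝ) := by
      intro m; rw [sub_zero]; exact hmξne m
    exact (hasDerivAt_Gamma (-ξ-(0:ℝ)) harg).comp 0 hin
  have hd_g3 : HasDerivAt (fun ε : ℝ => Real.Gamma (-((1+ξ)/2+ε)))
      (digamma (-((1+ξ)/2+(0:ℝ))) * Real.Gamma (-((1+ξ)/2+(0:ℝ))) * (-1)) 0 := by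
    have hin : HasDerivAt (fun ε : ℝ => -((1+ξ)/2+ε)) (-1 : ℝ) 0 := by
      exact (((hasDerivAt_id (0:ℝ)).const_add ((1+ξ)/2)).neg)
    have harg : ∀ m : ℕ, (-((1+ξ)/2+(0:ℝ))) ≠ -(m:ℝ) := by
      intro m; rw [add_zero, show -((1+ξ)/2) = -(1+ξ)/2 from by ring]; exact hsne m
    exact (hasDerivAt_Gamma (-((1+ξ)/2+(0:ℝ))) harg).comp 0 hin
  have hΓs0_ne : Real.Gamma (-((1+ξ)/2+(0:ℝ))) ≠ 0 := by
    rw [add_zero, show -((1+ξ)/2) = -(1+ξ)/2 from by ring]; exact hΓs_ne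
  -- assemble H and its derivative
  have hd_T1 := ((hd_A.const_mul (2*lam)).mul hd_G).div
    ((hasDerivAt_id (0:ℝ)).add_const ξ) (by simpa using hξ0.ne')
  have hd_T2 := (((hd_2.const_mul C).mul hd_g1).mul hd_g2).div hd_g3 hΓs0_ne
  have hd_H := hd_T1.sub hd_T2
  -- the summand identity and tsum computation
  have hK := (digamma 1 + digamma (1-ξ) - digamma (-(1+ξ)/2) - Real.log (2/A))
  have hsum_eq : (∑' j : ℕ,
      poch (-(1 + ξ) / 2) j / ((Nat.factorial j : ℝ) * poch (1 - ξ) j) * (2 / A) ^ j *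
        (digamma (1 + j) + digamma (1 - ξ + j) - digamma (-(1 + ξ) / 2 + j) -
          Real.log (2 / A))) =
      DG + G 0 * (digamma 1 + digamma (1-ξ) - digamma (-(1+ξ)/2) - Real.log (2/A)) := by
    have hpt : ∀ j : ℕ,
        poch (-(1 + ξ) / 2) j / ((Nat.factorial j : ℝ) * poch (1 - ξ) j) * (2 / A) ^ j *
          (digamma (1 + j) + digamma (1 - ξ + j) - digamma (-(1 + ξ) / 2 + j) -
            Real.log (2 / A)) =
        Dterm ξ A j 0 + fterm ξ A j 0 *
          (digamma 1 + digamma (1-ξ) - digamma (-(1+ξ)/2) - Real.log (2/A)) := by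
      intro j
      have hd1 := digamma_add_nat 1 (not_neg_nat_of_pos 1 one_pos) j
      have hd2 := digamma_add_nat (1-ξ) (not_neg_nat_of_pos _ (by linarith)) j
      have hd3 := digamma_add_nat (-(1+ξ)/2) hsne j
      rw [hd1, hd2, hd3, ← fterm_zero, Dterm, Sfun_zero]
      rw [Finset.sum_add_distrib, Finset.sum_add_distrib, Finset.sum_neg_distrib]
      ring
    rw [tsum_congr hpt,
      Summable.tsum_add (summable_Dterm hξ0 hξ1 hA)
        ((summable_fterm hξ0 hξ1 hA h0mem).mul_right _),
      tsum_mul_right]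
  -- identify the derivative value
  have hd_H' : HasDerivAt
      (fun ε : ℝ => 2*lam*A^((1+ξ)/2+ε)*G ε/(ε+ξ) -
        C*2^((1+ξ)/2+ε)*Real.Gamma (1-ε)*Real.Gamma (-ξ-ε)/Real.Gamma (-((1+ξ)/2+ε)))
      ((2 * lam / ξ) * A ^ ((1+ξ)/2) *
        (DG + G 0 * (digamma 1 + digamma (1-ξ) - digamma (-(1+ξ)/2) - Real.log (2/A)))) 0 := by
    convert hd_H using 1
    · rfl
    · rfl
    · rfl
    simp only [id_eq, add_zero, zero_add, sub_zero, mul_one, Real.Gamma_one, Pi.mul_apply]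
    rw [show -((1+ξ)/2) = -(1+ξ)/2 from by ring]
    rw [hC, hG0, Real.div_rpow hA.le (by norm_num : (0:ℝ) ≤ 2), hgam_ξ, hgam_s, hψmξ,
      hlog, hlam_eq]
    set P := A^((1+ξ)/2) with hPd
    set Q := (2:ℝ)^((1+ξ)/2) with hQd
    set Y := Real.Gamma (-ξ) with hYd
    set S := Real.Gamma (-(1+ξ)/2) with hSd
    field_simp [hΓs_ne, hΓmξ_ne, h2p_ne, hξ0.ne']
    ring
  -- H(0) = 0
  have hH0 : 2*lam*A^((1+ξ)/2+(0:ℝ))*G 0/((0:ℝ)+ξ) -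
      C*2^((1+ξ)/2+(0:ℝ))*Real.Gamma (1-(0:ℝ))*Real.Gamma (-ξ-(0:ℝ)) /
        Real.Gamma (-((1+ξ)/2+(0:ℝ))) = 0 := by
    simp only [add_zero, zero_add, sub_zero, Real.Gamma_one]
    rw [show -((1+ξ)/2) = -(1+ξ)/2 from by ring]
    rw [hC, hG0, Real.div_rpow hA.le (by norm_num : (0:ℝ) ≤ 2), hgam_ξ, hgam_s, hlam_eq]
    set P := A^((1+ξ)/2) with hPd
    set Q := (2:ℝ)^((1+ξ)/2) with hQd
    set Y := Real.Gamma (-ξ) with hYd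
    set S := Real.Gamma (-(1+ξ)/2) with hSd
    field_simp [hΓs_ne, hΓmξ_ne, h2p_ne, hξ0.ne']
    ring
  -- conclude
  have hslope := hasDerivAt_iff_tendsto_slope.mp hd_H'
  rw [show (1:ℝ)/2+ξ/2 = (1+ξ)/2 from by ring]
  rw [hsum_eq]
  refine Filter.Tendsto.congr' ?_ hslope
  have hIoo : Set.Ioo (-(rr ξ)) (rr ξ) ∈ nhds (0:ℝ) := Ioo_mem_nhds (by linarith) hr
  filter_upwards [mem_nhdsWithin_of_mem_nhds hIoo, self_mem_nhdsWithin] with ε hεI hεc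
  have hεne : ε ≠ 0 := hεc
  obtain ⟨hεl, hεr⟩ := hεI
  have hεξ : ε + ξ ≠ 0 := by nlinarith
  have hsg : -((1+ξ)/2+ε) < 0 := by nlinarith
  have hΓmsε_ne : Real.Gamma (-((1+ξ)/2+ε)) ≠ 0 :=
    Real.Gamma_ne_zero (not_neg_nat_of _ hsg.ne (by nlinarith))
  have hgam_ε : Real.Gamma (1-ε) = -ε * Real.Gamma (-ε) := by
    have h := Real.Gamma_add_one (s := -ε) (neg_ne_zero.2 hεne)
    rwa [show -ε + 1 = 1 - ε from by ring] at h
  have hF22G : F22 1 (-((1+ξ)/2+ε)) (1-ε) (1-ξ-ε) (2/A) = G ε := by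
    rw [hGdef]; exact rfl
  rw [slope_def_field]
  beta_reduce
  rw [hH0, sub_zero, sub_zero]
  rw [hF ((1+ξ)/2+ε)]
  rw [show (3:ℝ)/2+ξ/2 - ((1+ξ)/2+ε) = 1 - ε from by ring,
    show (3:ℝ)/2-ξ/2 - ((1+ξ)/2+ε) = 1 - ξ - ε from by ring,
    show (1:ℝ)/2+ξ/2 - ((1+ξ)/2+ε) = -ε from by ring,
    show (1:ℝ)/2-ξ/2 - ((1+ξ)/2+ε) = -ξ - ε from by ring,
    show ((1+ξ)/2+ε) * (((1+ξ)/2+ε) - 1) + 2*lam = ε*(ε+ξ) from by linear_combination hξ2/4,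
    hF22G, hgam_ε]
  field_simp
  ring
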